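/- Fix integers n ≥ 1 and N ≥ 1. Write A for the set of multi-indices α : {1,…,n} → {1,…,N}, M≤ ⊆ A for the subset of nondecreasing multi-indices, and M< ⊆ A for the subset of strictly increasing multi-indices. Given u : M≤ → ℝ and v : M< → ℝ, define φ : A → ℂ as follows: if α is not injective, φ(α) = u(α↑), where α↑ is the nondecreasing rearrangement of α; if α is injective, φ(α) = u(α↑) + i·sgn(σ_α)·v(α↑), where σ_α is the unique permutation of {1,…,n} with α = α↑ ∘ σ_α and sgn denotes the signature. Then for every J : A → ℝ one has the identity of complex numbers [∫_{ℝ^{M≤} × ℝ^{M<}} exp(−(1/2)·Σ_{α∈A} |φ(α)|² + Σ_{α∈A} φ(α)·J(α)) du dv] / [∫_{ℝ^{M≤} × ℝ^{M<}} exp(−(1/2)·Σ_{α∈A} |φ(α)|²) du dv] = exp((1/2)·Σ_{α,β∈A} J(α)·G(α,β)·J(β)), where the integrals are with respect to Lebesgue measure and G(α,β) = (2/n!)·Σ_{τ ∈ Sym({1,…,n}), sgn(τ) = −1} ∏_{i=1}^{n} 𝟙[α(τ(i)) = β(i)]. -/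

import Mathlib

open MeasureTheory
open scoped Classical
open Finset

noncomputable section

/-- The nondecreasing rearrangement of a multi-index `α : Fin n → Fin N`, as an
element of the set of nondecreasing multi-indices. -/
def sortedIdx {n N : ℕ} (α : Fin n → Fin N) : {α : Fin n → Fin N // Monotone α} :=
  ⟨α ∘ Tuple.sort α, Tuple.monotone_sort α⟩

/-- The strictly increasing rearrangement of an injective multi-index. -/
def sortedIdxStrict {n N : ℕ} (α : Fin n → Fin N) (h : Function.Injective α) :
    {α : Fin n → Fin N // StrictMono α} :=
  ⟨α ∘ Tuple.sort α,
    (Tuple.monotone_sort α).strictMono_of_injective (h.comp (Equiv.injective _))⟩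

/-- The complex tensor field `φ` built from its independent components: the real parts
`u` indexed by nondecreasing multi-indices and the imaginary parts `v` indexed by
strictly increasing multi-indices.  For `α` injective,
`φ(α) = u(α↑) + i·sgn(σ_α)·v(α↑)` where `σ_α = (Tuple.sort α)⁻¹` is the unique
permutation with `α = α↑ ∘ σ_α`; otherwise `φ(α) = u(α↑)`. -/
def phiField {n N : ℕ} (u : {α : Fin n → Fin N // Monotone α} → ℝ)
    (v : {α : Fin n → Fin N // StrictMono α} → ℝ) (α : Fin n → Fin N) : ℂ :=
  if h : Function.Injective α then
    (u (sortedIdx α) : ℂ) +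
      Complex.I * (((Equiv.Perm.sign (Tuple.sort α)⁻¹ : ℤˣ) : ℤ) : ℂ) *
        (v (sortedIdxStrict α h) : ℂ)
  else (u (sortedIdx α) : ℂ)

/-- The antisymmetrized propagator
`G(α,β) = (2/n!) · Σ_{τ odd} ∏ᵢ 𝟙[α(τ(i)) = β(i)]`. -/
def oddProp {n N : ℕ} (α β : Fin n → Fin N) : ℝ :=
  (2 / (n.factorial : ℝ)) *
    ∑ τ ∈ Finset.univ.filter (fun τ : Equiv.Perm (Fin n) => Equiv.Perm.sign τ = -1),
      ∏ i : Fin n, if α (τ i) = β i then (1 : ℝ) else 0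

variable {n N : ℕ}

lemma sortedIdx_of_monotone (μ : {α : Fin n → Fin N // Monotone α}) : sortedIdx μ.1 = μ := by
  have : Tuple.sort μ.1 = Equiv.refl _ := Tuple.sort_eq_refl_iff_monotone.mpr μ.2
  apply Subtype.ext
  simp [sortedIdx, this]

lemma sortedIdx_comp (μ : {α : Fin n → Fin N // Monotone α}) (σ : Equiv.Perm (Fin n)) :
    sortedIdx (μ.1 ∘ σ) = μ := by
  apply Subtype.ext
  show (μ.1 ∘ σ) ∘ Tuple.sort (μ.1 ∘ σ) = μ.1
  rw [Tuple.comp_perm_comp_sort_eq_comp_sort]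
  have : Tuple.sort μ.1 = Equiv.refl _ := Tuple.sort_eq_refl_iff_monotone.mpr μ.2
  simp [this]

lemma comp_sort_inv (α : Fin n → Fin N) : (sortedIdx α).1 ∘ ⇑(Tuple.sort α)⁻¹ = α := by
  funext i
  simp [sortedIdx]

lemma sort_comp_strict (ν : {α : Fin n → Fin N // StrictMono α}) (σ : Equiv.Perm (Fin n)) :
    Tuple.sort (ν.1 ∘ σ) = σ⁻¹ := by
  have h1 : (ν.1 ∘ ⇑σ) ∘ ⇑(Tuple.sort (ν.1 ∘ ⇑σ)) = ν.1 ∘ ⇑(Tuple.sort ν.1) :=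
    Tuple.comp_perm_comp_sort_eq_comp_sort
  have h2 : Tuple.sort ν.1 = Equiv.refl _ :=
    Tuple.sort_eq_refl_iff_monotone.mpr ν.2.monotone
  rw [h2] at h1
  apply Equiv.ext
  intro i
  have := congrFun h1 i
  simp only [Function.comp_apply, Equiv.refl_apply] at this
  have h3 := ν.2.injective this
  exact (Equiv.eq_symm_apply σ).mpr h3

/-- The fiber of the sorting map over a monotone multi-index. -/
def fiber (μ : {α : Fin n → Fin N // Monotone α}) : Finset (Fin n → Fin N) :=
  univ.filter (fun α => sortedIdx α = μ)

lemma mem_fiber {μ : {α : Fin n → Fin N // Monotone α}} {α : Fin n → Fin N} :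
    α ∈ fiber μ ↔ sortedIdx α = μ := by simp [fiber]

lemma self_mem_fiber (μ : {α : Fin n → Fin N // Monotone α}) : μ.1 ∈ fiber μ :=
  mem_fiber.mpr (sortedIdx_of_monotone μ)

lemma comp_mem_fiber (μ : {α : Fin n → Fin N // Monotone α}) (σ : Equiv.Perm (Fin n)) :
    μ.1 ∘ ⇑σ ∈ fiber μ := mem_fiber.mpr (sortedIdx_comp μ σ)

lemma fiber_card_pos (μ : {α : Fin n → Fin N // Monotone α}) : 0 < (fiber μ).card :=
  Finset.card_pos.mpr ⟨μ.1, self_mem_fiber μ⟩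

/-- Elements of the fiber of a strictly monotone index are injective. -/
lemma injective_of_mem_fiber_strict {μ : {α : Fin n → Fin N // Monotone α}}
    (hs : StrictMono μ.1) {α : Fin n → Fin N} (hα : α ∈ fiber μ) : Function.Injective α := by
  have h := comp_sort_inv α
  rw [mem_fiber.mp hα] at h
  rw [← h]
  exact (hs.injective).comp (Equiv.injective _)

lemma not_injective_of_mem_fiber {μ : {α : Fin n → Fin N // Monotone α}}
    (hs : ¬ StrictMono μ.1) {α : Fin n → Fin N} (hα : α ∈ fiber μ) :
    ¬ Function.Injective α := by
  intro hinj
  apply hs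
  rw [← mem_fiber.mp hα]
  exact ((Tuple.monotone_sort α).strictMono_of_injective (hinj.comp (Equiv.injective _)))

/-- Strict fibers are parametrized by permutations. -/
lemma sum_fiber_strict {M : Type*} [AddCommMonoid M] (ν : {α : Fin n → Fin N // StrictMono α})
    (g : (Fin n → Fin N) → M) :
    ∑ α ∈ fiber ⟨ν.1, ν.2.monotone⟩, g α = ∑ σ : Equiv.Perm (Fin n), g (ν.1 ∘ ⇑σ) := by
  refine Finset.sum_nbij' (fun α => (Tuple.sort α)⁻¹) (fun σ => ν.1 ∘ ⇑σ) ?_ ?_ ?_ ?_ ?_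
  · intro α _; exact Finset.mem_univ _
  · intro σ _; exact comp_mem_fiber _ σ
  · intro α hα
    have := comp_sort_inv α
    rw [mem_fiber.mp hα] at this
    exact this
  · intro σ _
    show (Tuple.sort (ν.1 ∘ ⇑σ))⁻¹ = σ
    rw [sort_comp_strict ν σ, inv_inv]
  · intro α hα
    have := comp_sort_inv α
    rw [mem_fiber.mp hα] at this
    rw [this]

lemma fiber_card_strict (ν : {α : Fin n → Fin N // StrictMono α}) :
    (fiber ⟨ν.1, ν.2.monotone⟩).card = n.factorial := by
  have := sum_fiber_strict (M := ℕ) ν (fun _ => 1)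
  simpa [Finset.card_univ, Fintype.card_perm, Fintype.card_fin] using this

/-- The stabilizer cardinality. -/
def stabc (μ : {α : Fin n → Fin N // Monotone α}) : ℕ :=
  (univ.filter (fun σ : Equiv.Perm (Fin n) => μ.1 ∘ ⇑σ = μ.1)).card

lemma card_comp_eq_fiber {μ : {α : Fin n → Fin N // Monotone α}} {β : Fin n → Fin N}
    (hβ : β ∈ fiber μ) :
    (univ.filter (fun σ : Equiv.Perm (Fin n) => μ.1 ∘ ⇑σ = β)).card = stabc μ := by
  obtain ⟨ρ, hρ⟩ : ∃ ρ : Equiv.Perm (Fin n), μ.1 ∘ ⇑ρ = β := by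
    refine ⟨(Tuple.sort β)⁻¹, ?_⟩
    have := comp_sort_inv β
    rwa [mem_fiber.mp hβ] at this
  refine Finset.card_nbij' (fun σ => σ * ρ⁻¹) (fun σ => σ * ρ) ?_ ?_ ?_ ?_
  · intro σ hσ
    simp only [Finset.coe_filter, Set.mem_setOf_eq, Finset.mem_filter, Finset.mem_univ, true_and] at hσ ⊢
    funext i
    simp only [Function.comp_apply, Equiv.Perm.coe_mul]
    calc μ.1 (σ (ρ⁻¹ i)) = β (ρ⁻¹ i) := congrFun hσ _
      _ = μ.1 (ρ (ρ⁻¹ i)) := (congrFun hρ _).symm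
      _ = μ.1 i := by simp
  · intro σ hσ
    simp only [Finset.coe_filter, Set.mem_setOf_eq, Finset.mem_filter, Finset.mem_univ, true_and] at hσ ⊢
    funext i
    simp only [Function.comp_apply, Equiv.Perm.coe_mul]
    calc μ.1 (σ (ρ i)) = μ.1 (ρ i) := congrFun hσ _
      _ = β i := congrFun hρ i
  · intro σ _; simp [mul_assoc]
  · intro σ _; simp [mul_assoc]

lemma sum_comp_perm {M : Type*} [AddCommMonoid M] (μ : {α : Fin n → Fin N // Monotone α})
    (g : (Fin n → Fin N) → M) :
    ∑ σ : Equiv.Perm (Fin n), g (μ.1 ∘ ⇑σ) = stabc μ • ∑ β ∈ fiber μ, g β := by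
  have h := Finset.sum_fiberwise_of_maps_to (s := (univ : Finset (Equiv.Perm (Fin n))))
    (t := fiber μ) (g := fun σ => μ.1 ∘ ⇑σ) (fun σ _ => comp_mem_fiber μ σ)
    (fun σ => g (μ.1 ∘ ⇑σ))
  rw [← h, Finset.smul_sum]
  refine Finset.sum_congr rfl (fun β hβ => ?_)
  have : ∀ σ ∈ univ.filter (fun σ : Equiv.Perm (Fin n) => μ.1 ∘ ⇑σ = β),
      g (μ.1 ∘ ⇑σ) = g β := by
    intro σ hσ
    simp only [Finset.mem_filter] at hσ
    rw [hσ.2]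
  rw [Finset.sum_congr rfl this, Finset.sum_const, card_comp_eq_fiber hβ]

lemma stabc_mul_card (μ : {α : Fin n → Fin N // Monotone α}) :
    stabc μ * (fiber μ).card = n.factorial := by
  have h := sum_comp_perm (M := ℕ) μ (fun _ => 1)
  simpa [Finset.card_univ, Fintype.card_perm, Fintype.card_fin, mul_comm] using h.symm

/-- Sum of the source over a permutation orbit. -/
def Asum (J : (Fin n → Fin N) → ℝ) (α : Fin n → Fin N) : ℝ :=
  ∑ τ : Equiv.Perm (Fin n), J (α ∘ ⇑τ)

/-- Signed sum of the source over a permutation orbit. -/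
def Bsum (J : (Fin n → Fin N) → ℝ) (α : Fin n → Fin N) : ℝ :=
  ∑ τ : Equiv.Perm (Fin n), (((Equiv.Perm.sign τ : ℤˣ) : ℤ) : ℝ) * J (α ∘ ⇑τ)

variable {J : (Fin n → Fin N) → ℝ}

lemma comp_mul_eq (α : Fin n → Fin N) (σ τ : Equiv.Perm (Fin n)) :
    α ∘ ⇑(σ * τ) = (α ∘ ⇑σ) ∘ ⇑τ := rfl

lemma Asum_comp (α : Fin n → Fin N) (ρ : Equiv.Perm (Fin n)) :
    Asum J (α ∘ ⇑ρ) = Asum J α := by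
  unfold Asum
  rw [← Equiv.sum_comp (Equiv.mulLeft ρ) (fun τ => J (α ∘ ⇑τ))]
  refine Finset.sum_congr rfl (fun τ _ => ?_)
  rw [Equiv.coe_mulLeft, ← comp_mul_eq]

lemma Bsum_comp (α : Fin n → Fin N) (ρ : Equiv.Perm (Fin n)) :
    Bsum J (α ∘ ⇑ρ) = (((Equiv.Perm.sign ρ : ℤˣ) : ℤ) : ℝ) * Bsum J α := by
  unfold Bsum
  rw [Finset.mul_sum,
    ← Equiv.sum_comp (Equiv.mulLeft ρ)
      (fun τ => (((Equiv.Perm.sign ρ : ℤˣ) : ℤ) : ℝ) * ((((Equiv.Perm.sign τ : ℤˣ) : ℤ) : ℝ) * J (α ∘ ⇑τ)))]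
  refine Finset.sum_congr rfl (fun τ _ => ?_)
  rw [Equiv.coe_mulLeft, ← comp_mul_eq]
  rw [← mul_assoc]
  congr 1
  · have hsq : (((Equiv.Perm.sign ρ : ℤˣ) : ℤ) : ℝ) ^ 2 = 1 := by
      rcases Int.units_eq_one_or (Equiv.Perm.sign ρ) with h | h <;> simp [h]
    rw [Equiv.Perm.sign_mul]
    push_cast
    rw [← mul_assoc, ← sq, hsq, one_mul]

lemma Bsum_eq_zero {α : Fin n → Fin N} (h : ¬ Function.Injective α) : Bsum J α = 0 := by
  obtain ⟨i, j, hij, hne⟩ := Function.not_injective_iff.mp h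
  set π := Equiv.swap i j with hπ
  have hstab : α ∘ ⇑π = α := by
    funext k
    simp only [Function.comp_apply, hπ, Equiv.swap_apply_def]
    split_ifs with h1 h2
    · rw [h1, hij]
    · rw [h2, hij]
    · rfl
  have hsign : Equiv.Perm.sign π = -1 := Equiv.Perm.sign_swap hne
  have key : Bsum J α = - Bsum J α := by
    conv_lhs => rw [Bsum, ← Equiv.sum_comp (Equiv.mulLeft π)
      (fun τ => (((Equiv.Perm.sign τ : ℤˣ) : ℤ) : ℝ) * J (α ∘ ⇑τ))]
    rw [Bsum, ← Finset.sum_neg_distrib]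
    refine Finset.sum_congr rfl (fun τ _ => ?_)
    rw [Equiv.coe_mulLeft, comp_mul_eq, hstab, Equiv.Perm.sign_mul, hsign]
    push_cast
    ring
  linarith

/-- Source summed over a fiber. -/
def aSrc (J : (Fin n → Fin N) → ℝ) (μ : {α : Fin n → Fin N // Monotone α}) : ℝ :=
  ∑ β ∈ fiber μ, J β

/-- Signed source sum over the orbit of a strictly monotone index. -/
def bSrc (J : (Fin n → Fin N) → ℝ) (ν : {α : Fin n → Fin N // StrictMono α}) : ℝ :=
  Bsum J ν.1

/-- The sign of the sorting permutation, as a real number. -/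
def sgnR (α : Fin n → Fin N) : ℝ := (((Equiv.Perm.sign (Tuple.sort α)⁻¹ : ℤˣ) : ℤ) : ℝ)

lemma sgnR_comp_strict (ν : {α : Fin n → Fin N // StrictMono α}) (σ : Equiv.Perm (Fin n)) :
    sgnR (ν.1 ∘ ⇑σ) = (((Equiv.Perm.sign σ : ℤˣ) : ℤ) : ℝ) := by
  unfold sgnR
  rw [sort_comp_strict ν σ, inv_inv]

lemma Asum_of_mem_fiber {μ : {α : Fin n → Fin N // Monotone α}} {α : Fin n → Fin N}
    (hα : α ∈ fiber μ) : Asum J α = (stabc μ : ℝ) * aSrc J μ := by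
  have h : μ.1 ∘ ⇑(Tuple.sort α)⁻¹ = α := by
    have := comp_sort_inv α; rwa [mem_fiber.mp hα] at this
  rw [← h, Asum_comp]
  have := sum_comp_perm (M := ℝ) μ J
  rw [Asum, this, nsmul_eq_mul]
  rfl

lemma Bsum_of_mem_fiber_strict (ν : {α : Fin n → Fin N // StrictMono α}) {α : Fin n → Fin N}
    (hα : α ∈ fiber ⟨ν.1, ν.2.monotone⟩) : Bsum J α = sgnR α * bSrc J ν := by
  have h : ν.1 ∘ ⇑(Tuple.sort α)⁻¹ = α := by
    have := comp_sort_inv α; rwa [mem_fiber.mp hα] at this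
  rw [← h, Bsum_comp, sgnR]
  congr 2
  rw [sort_comp_strict ν, inv_inv]

lemma sum_sgn_fiber_strict (ν : {α : Fin n → Fin N // StrictMono α}) :
    ∑ α ∈ fiber ⟨ν.1, ν.2.monotone⟩, sgnR α * J α = bSrc J ν := by
  rw [sum_fiber_strict ν (fun α => sgnR α * J α), bSrc, Bsum]
  refine Finset.sum_congr rfl (fun σ _ => ?_)
  rw [sgnR_comp_strict]

lemma sum_dite_strict (G : {α : Fin n → Fin N // StrictMono α} → ℝ) :
    ∑ μ : {α : Fin n → Fin N // Monotone α},
      (if h : StrictMono μ.1 then G ⟨μ.1, h⟩ else 0) = ∑ ν : {α : Fin n → Fin N // StrictMono α}, G ν := by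
  rw [← Finset.sum_filter_add_sum_filter_not univ (fun μ => StrictMono μ.1)]
  have h2 : ∑ μ ∈ univ.filter (fun μ : {α : Fin n → Fin N // Monotone α} => ¬ StrictMono μ.1),
      (if h : StrictMono μ.1 then G ⟨μ.1, h⟩ else 0) = 0 := by
    refine Finset.sum_eq_zero (fun μ hμ => ?_)
    rw [dif_neg (Finset.mem_filter.mp hμ).2]
  rw [h2, add_zero]
  refine Finset.sum_bij' (fun μ hμ => (⟨μ.1, (Finset.mem_filter.mp hμ).2⟩ :
      {α : Fin n → Fin N // StrictMono α}))
    (fun ν _ => ⟨ν.1, ν.2.monotone⟩) ?_ ?_ ?_ ?_ ?_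
  · intro μ hμ; exact Finset.mem_univ _
  · intro ν _
    simp only [Finset.mem_filter, Finset.mem_univ, true_and]
    exact ν.2
  · intro μ hμ; rfl
  · intro ν _; rfl
  · intro μ hμ
    rw [dif_pos (Finset.mem_filter.mp hμ).2]


lemma oddProp_row (α : Fin n → Fin N) :
    ∑ β : Fin n → Fin N, J α * oddProp α β * J β
      = (2 / (n.factorial : ℝ)) *
        ∑ τ ∈ Finset.univ.filter (fun τ : Equiv.Perm (Fin n) => Equiv.Perm.sign τ = -1),
          J α * J (α ∘ ⇑τ) := by
  have h1 : ∀ β, J α * oddProp α β * J β = (2 / (n.factorial : ℝ)) *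
      ∑ τ ∈ Finset.univ.filter (fun τ : Equiv.Perm (Fin n) => Equiv.Perm.sign τ = -1),
        (if α ∘ ⇑τ = β then J α * J β else 0) := by
    intro β
    rw [oddProp]
    have h2 : ∀ τ : Equiv.Perm (Fin n),
        (∏ i : Fin n, if α (τ i) = β i then (1 : ℝ) else 0)
          = if α ∘ ⇑τ = β then (1:ℝ) else 0 := by
      intro τ
      rw [Finset.prod_boole]
      congr 1
      simp [funext_iff]
    simp_rw [h2]
    rw [Finset.mul_sum, Finset.mul_sum, Finset.sum_mul, Finset.mul_sum]
    refine Finset.sum_congr rfl (fun τ _ => ?_)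
    split_ifs <;> ring
  simp_rw [h1]
  rw [← Finset.mul_sum, Finset.sum_comm]
  congr 1
  refine Finset.sum_congr rfl (fun τ _ => ?_)
  rw [Finset.sum_ite_eq]
  simp

lemma odd_sum_eq (α : Fin n → Fin N) :
    ∑ τ ∈ Finset.univ.filter (fun τ : Equiv.Perm (Fin n) => Equiv.Perm.sign τ = -1),
        J α * J (α ∘ ⇑τ)
      = (J α * Asum J α - J α * Bsum J α) / 2 := by
  have : Asum J α - Bsum J α = ∑ τ : Equiv.Perm (Fin n),
      (if Equiv.Perm.sign τ = -1 then 2 * J (α ∘ ⇑τ) else 0) := by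
    rw [Asum, Bsum, ← Finset.sum_sub_distrib]
    refine Finset.sum_congr rfl (fun τ _ => ?_)
    rcases Int.units_eq_one_or (Equiv.Perm.sign τ) with h | h <;> simp [h] <;> ring
  rw [Finset.sum_filter, ← mul_sub, this, Finset.mul_sum, Finset.sum_div]
  refine Finset.sum_congr rfl (fun τ _ => ?_)
  split_ifs <;> ring

lemma sum_fiberwise_all (g : (Fin n → Fin N) → ℝ) :
    ∑ μ : {α : Fin n → Fin N // Monotone α}, ∑ α ∈ fiber μ, g α
      = ∑ α : Fin n → Fin N, g α := by
  exact Finset.sum_fiberwise_of_maps_to (fun α _ => Finset.mem_univ (sortedIdx α)) g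

lemma key_identity (J : (Fin n → Fin N) → ℝ) :
    (1/2 : ℝ) * ∑ α : Fin n → Fin N, ∑ β : Fin n → Fin N, J α * oddProp α β * J β
      = ∑ μ : {α : Fin n → Fin N // Monotone α}, aSrc J μ ^ 2 / (2 * ((fiber μ).card : ℝ))
        - ∑ ν : {α : Fin n → Fin N // StrictMono α}, bSrc J ν ^ 2 / (2 * (n.factorial : ℝ)) := by
  have hfact : (n.factorial : ℝ) ≠ 0 := Nat.cast_ne_zero.mpr (Nat.factorial_ne_zero n)
  have hrow : ∀ α, ∑ β : Fin n → Fin N, J α * oddProp α β * J β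
      = (2 / (n.factorial : ℝ)) * ((J α * Asum J α - J α * Bsum J α) / 2) := by
    intro α
    rw [oddProp_row, odd_sum_eq]
  have hA : ∑ α : Fin n → Fin N, J α * Asum J α
      = ∑ μ : {α : Fin n → Fin N // Monotone α}, (stabc μ : ℝ) * aSrc J μ ^ 2 := by
    rw [← sum_fiberwise_all (fun α => J α * Asum J α)]
    refine Finset.sum_congr rfl (fun μ _ => ?_)
    have : ∀ α ∈ fiber μ, J α * Asum J α = J α * ((stabc μ : ℝ) * aSrc J μ) := by
      intro α hα; rw [Asum_of_mem_fiber hα]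
    rw [Finset.sum_congr rfl this, ← Finset.sum_mul]
    rw [show ∑ α ∈ fiber μ, J α = aSrc J μ from rfl]
    ring
  have hB : ∑ α : Fin n → Fin N, J α * Bsum J α
      = ∑ ν : {α : Fin n → Fin N // StrictMono α}, bSrc J ν ^ 2 := by
    rw [← sum_fiberwise_all (fun α => J α * Bsum J α)]
    rw [← sum_dite_strict (fun ν => bSrc J ν ^ 2)]
    refine Finset.sum_congr rfl (fun μ _ => ?_)
    by_cases h : StrictMono μ.1
    · rw [dif_pos h]
      set ν : {α : Fin n → Fin N // StrictMono α} := ⟨μ.1, h⟩ with hν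
      have hμν : μ = ⟨ν.1, ν.2.monotone⟩ := Subtype.ext rfl
      rw [hμν]
      have : ∀ α ∈ fiber ⟨ν.1, ν.2.monotone⟩, J α * Bsum J α = bSrc J ν * (sgnR α * J α) := by
        intro α hα
        rw [Bsum_of_mem_fiber_strict ν hα]
        ring
      rw [Finset.sum_congr rfl this, ← Finset.mul_sum, sum_sgn_fiber_strict]
      ring
    · rw [dif_neg h]
      refine Finset.sum_eq_zero (fun α hα => ?_)
      rw [Bsum_eq_zero (not_injective_of_mem_fiber h hα), mul_zero]
  simp_rw [hrow]
  rw [← Finset.mul_sum]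
  have expand : ∑ α : Fin n → Fin N, (J α * Asum J α - J α * Bsum J α) / 2
      = ((∑ μ : {α : Fin n → Fin N // Monotone α}, (stabc μ : ℝ) * aSrc J μ ^ 2)
        - ∑ ν : {α : Fin n → Fin N // StrictMono α}, bSrc J ν ^ 2) / 2 := by
    rw [← Finset.sum_div]
    congr 1
    rw [Finset.sum_sub_distrib, hA, hB]
  rw [expand]
  have hterm : ∀ μ : {α : Fin n → Fin N // Monotone α},
      (stabc μ : ℝ) * aSrc J μ ^ 2 / (2 * (n.factorial : ℝ))
        = aSrc J μ ^ 2 / (2 * ((fiber μ).card : ℝ)) := by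
    intro μ
    have hsc : (stabc μ : ℝ) * ((fiber μ).card : ℝ) = (n.factorial : ℝ) := by
      rw [← Nat.cast_mul, stabc_mul_card]
    have hc0 : ((fiber μ).card : ℝ) ≠ 0 := by
      exact_mod_cast (fiber_card_pos μ).ne'
    have hs0 : (stabc μ : ℝ) ≠ 0 := by
      intro h0
      rw [h0, zero_mul] at hsc
      exact hfact hsc.symm
    rw [← hsc]
    field_simp
  simp_rw [← hterm]
  rw [← Finset.sum_div, ← Finset.sum_div]
  field_simp


/-- Extension of the imaginary components by zero to all multi-indices. -/
def vext (v : {α : Fin n → Fin N // StrictMono α} → ℝ) (α : Fin n → Fin N) : ℝ :=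
  if h : Function.Injective α then v (sortedIdxStrict α h) else 0

variable {u : {α : Fin n → Fin N // Monotone α} → ℝ}
variable {v : {α : Fin n → Fin N // StrictMono α} → ℝ}

lemma phi_decomp (α : Fin n → Fin N) :
    phiField u v α = (u (sortedIdx α) : ℂ) + Complex.I * (sgnR α : ℂ) * (vext v α : ℂ) := by
  unfold phiField vext sgnR
  split_ifs with h
  · push_cast
    ring
  · push_cast
    ring

lemma sgnR_sq (α : Fin n → Fin N) : sgnR α ^ 2 = 1 := by
  unfold sgnR
  rcases Int.units_eq_one_or (Equiv.Perm.sign (Tuple.sort α)⁻¹) with h | h <;> simp [h]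

lemma abs_phi_sq (α : Fin n → Fin N) :
    (‖(phiField u v α)‖) ^ 2 = u (sortedIdx α) ^ 2 + vext v α ^ 2 := by
  rw [phi_decomp, Complex.sq_norm, Complex.normSq_apply]
  have hre : ((u (sortedIdx α) : ℂ) + Complex.I * (sgnR α : ℂ) * (vext v α : ℂ)).re
      = u (sortedIdx α) := by simp
  have him : ((u (sortedIdx α) : ℂ) + Complex.I * (sgnR α : ℂ) * (vext v α : ℂ)).im
      = sgnR α * vext v α := by simp
  rw [hre, him]
  have := sgnR_sq α
  nlinarith [sgnR_sq α]

lemma vext_of_mem_fiber_strict {μ : {α : Fin n → Fin N // Monotone α}} (h : StrictMono μ.1)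
    {α : Fin n → Fin N} (hα : α ∈ fiber μ) : vext v α = v ⟨μ.1, h⟩ := by
  have hinj : Function.Injective α := injective_of_mem_fiber_strict h hα
  rw [vext, dif_pos hinj]
  congr 1
  apply Subtype.ext
  show (α ∘ ⇑(Tuple.sort α)) = μ.1
  exact congrArg Subtype.val (mem_fiber.mp hα)

lemma vext_of_mem_fiber_nonstrict {μ : {α : Fin n → Fin N // Monotone α}} (h : ¬ StrictMono μ.1)
    {α : Fin n → Fin N} (hα : α ∈ fiber μ) : vext v α = 0 := by
  rw [vext, dif_neg (not_injective_of_mem_fiber h hα)]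

lemma sum_abs_phi_sq :
    ∑ α : Fin n → Fin N, (‖(phiField u v α)‖) ^ 2
      = (∑ μ : {α : Fin n → Fin N // Monotone α}, ((fiber μ).card : ℝ) * u μ ^ 2)
        + ∑ ν : {α : Fin n → Fin N // StrictMono α}, (n.factorial : ℝ) * v ν ^ 2 := by
  simp_rw [abs_phi_sq]
  rw [Finset.sum_add_distrib]
  congr 1
  · rw [← sum_fiberwise_all (fun α => u (sortedIdx α) ^ 2)]
    refine Finset.sum_congr rfl (fun μ _ => ?_)
    have : ∀ α ∈ fiber μ, u (sortedIdx α) ^ 2 = u μ ^ 2 := by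
      intro α hα; rw [mem_fiber.mp hα]
    rw [Finset.sum_congr rfl this, Finset.sum_const, nsmul_eq_mul]
  · rw [← sum_fiberwise_all (fun α => vext v α ^ 2),
      ← sum_dite_strict (fun ν => (n.factorial : ℝ) * v ν ^ 2)]
    refine Finset.sum_congr rfl (fun μ _ => ?_)
    by_cases h : StrictMono μ.1
    · rw [dif_pos h]
      have : ∀ α ∈ fiber μ, vext v α ^ 2 = v ⟨μ.1, h⟩ ^ 2 := by
        intro α hα; rw [vext_of_mem_fiber_strict h hα]
      rw [Finset.sum_congr rfl this, Finset.sum_const, nsmul_eq_mul]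
      congr 2
      have := fiber_card_strict (⟨μ.1, h⟩ : {α : Fin n → Fin N // StrictMono α})
      rw [show (⟨(⟨μ.1, h⟩ : {α : Fin n → Fin N // StrictMono α}).1,
        (⟨μ.1, h⟩ : {α : Fin n → Fin N // StrictMono α}).2.monotone⟩ :
        {α : Fin n → Fin N // Monotone α}) = μ from Subtype.ext rfl] at this
      rw [this]
    · rw [dif_neg h]
      refine Finset.sum_eq_zero (fun α hα => ?_)
      rw [vext_of_mem_fiber_nonstrict h hα]
      ring

lemma sum_phi_mul_J (J : (Fin n → Fin N) → ℝ) :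
    ∑ α : Fin n → Fin N, phiField u v α * (J α : ℂ)
      = ((∑ μ : {α : Fin n → Fin N // Monotone α}, u μ * aSrc J μ : ℝ) : ℂ)
        + Complex.I * ((∑ ν : {α : Fin n → Fin N // StrictMono α}, v ν * bSrc J ν : ℝ) : ℂ) := by
  have RL2a : ∑ α : Fin n → Fin N, u (sortedIdx α) * J α
      = ∑ μ : {α : Fin n → Fin N // Monotone α}, u μ * aSrc J μ := by
    rw [← sum_fiberwise_all (fun α => u (sortedIdx α) * J α)]
    refine Finset.sum_congr rfl (fun μ _ => ?_)
    have : ∀ α ∈ fiber μ, u (sortedIdx α) * J α = u μ * J α := by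
      intro α hα; rw [mem_fiber.mp hα]
    rw [Finset.sum_congr rfl this, ← Finset.mul_sum]
    rfl
  have RL2b : ∑ α : Fin n → Fin N, sgnR α * vext v α * J α
      = ∑ ν : {α : Fin n → Fin N // StrictMono α}, v ν * bSrc J ν := by
    rw [← sum_fiberwise_all (fun α => sgnR α * vext v α * J α),
      ← sum_dite_strict (fun ν => v ν * bSrc J ν)]
    refine Finset.sum_congr rfl (fun μ _ => ?_)
    by_cases h : StrictMono μ.1
    · rw [dif_pos h]
      have : ∀ α ∈ fiber μ, sgnR α * vext v α * J α = v ⟨μ.1, h⟩ * (sgnR α * J α) := by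
        intro α hα; rw [vext_of_mem_fiber_strict h hα]; ring
      rw [Finset.sum_congr rfl this, ← Finset.mul_sum]
      congr 1
      have := sum_sgn_fiber_strict (J := J) (⟨μ.1, h⟩ : {α : Fin n → Fin N // StrictMono α})
      rw [show (⟨(⟨μ.1, h⟩ : {α : Fin n → Fin N // StrictMono α}).1,
        (⟨μ.1, h⟩ : {α : Fin n → Fin N // StrictMono α}).2.monotone⟩ :
        {α : Fin n → Fin N // Monotone α}) = μ from Subtype.ext rfl] at this
      rw [this]
    · rw [dif_neg h]
      refine Finset.sum_eq_zero (fun α hα => ?_)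
      rw [vext_of_mem_fiber_nonstrict h hα]
      ring
  rw [← RL2a, ← RL2b]
  push_cast
  rw [Finset.mul_sum, ← Finset.sum_add_distrib]
  refine Finset.sum_congr rfl (fun α _ => ?_)
  rw [phi_decomp]
  push_cast
  ring

open Complex in
lemma gauss_real (k : ℝ) (hk : 0 < k) (c : ℂ) :
    ∫ x : ℝ, Complex.exp (-(k:ℂ)/2 * x^2 + c * x)
      = ((Real.pi : ℂ) / ((k:ℂ)/2)) ^ (1/2 : ℂ) * Complex.exp (c^2 / (2*k)) := by
  have hb : ((((-(k/2) : ℝ)) : ℂ)).re < 0 := by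
    rw [Complex.ofReal_re]
    linarith
  have h0 : ∀ x : ℝ, -(k:ℂ)/2 * x^2 + c * x = ((-(k/2) : ℝ) : ℂ) * x^2 + c * x + 0 := by
    intro x; push_cast; ring
  simp_rw [h0]
  rw [integral_cexp_quadratic hb c 0]
  congr 1
  · congr 1
    push_cast
    ring
  · congr 1
    rw [zero_sub]
    rw [show 4 * ((-(k/2) : ℝ) : ℂ) = -(2*k) by push_cast; ring]
    rw [div_neg, neg_neg]

/-- One-dimensional factor for a real component. -/
def fC (J : (Fin n → Fin N) → ℝ) (μ : {α : Fin n → Fin N // Monotone α}) (x : ℝ) : ℂ :=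
  Complex.exp (-((((fiber μ).card : ℝ)) : ℂ)/2 * x^2 + ((aSrc J μ : ℝ) : ℂ) * x)

/-- One-dimensional factor for an imaginary component. -/
def fS (J : (Fin n → Fin N) → ℝ) (ν : {α : Fin n → Fin N // StrictMono α}) (y : ℝ) : ℂ :=
  Complex.exp (-(((n.factorial : ℝ)) : ℂ)/2 * y^2 + Complex.I * ((bSrc J ν : ℝ) : ℂ) * y)

lemma exponent_eq (J : (Fin n → Fin N) → ℝ)
    (u : {α : Fin n → Fin N // Monotone α} → ℝ)
    (v : {α : Fin n → Fin N // StrictMono α} → ℝ) :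
    -(1/2 : ℂ) * ∑ α : Fin n → Fin N, ((‖(phiField u v α)‖ : ℝ) : ℂ) ^ 2
        + ∑ α : Fin n → Fin N, phiField u v α * (J α : ℂ)
      = (∑ μ : {α : Fin n → Fin N // Monotone α},
          (-((((fiber μ).card : ℝ)) : ℂ)/2 * ((u μ : ℝ) : ℂ)^2 + ((aSrc J μ : ℝ) : ℂ) * ((u μ : ℝ) : ℂ)))
        + ∑ ν : {α : Fin n → Fin N // StrictMono α},
          (-(((n.factorial : ℝ)) : ℂ)/2 * ((v ν : ℝ) : ℂ)^2
            + Complex.I * ((bSrc J ν : ℝ) : ℂ) * ((v ν : ℝ) : ℂ)) := by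
  have h1 : ∑ α : Fin n → Fin N, ((‖(phiField u v α)‖ : ℝ) : ℂ) ^ 2
      = ((∑ α : Fin n → Fin N, (‖(phiField u v α)‖) ^ 2 : ℝ) : ℂ) := by
    push_cast
    rfl
  rw [h1, sum_abs_phi_sq, sum_phi_mul_J J, Finset.sum_add_distrib, Finset.sum_add_distrib]
  have eA : (-(1/2 : ℂ)) * ((∑ μ : {α : Fin n → Fin N // Monotone α},
      ((fiber μ).card : ℝ) * u μ ^ 2 : ℝ) : ℂ)
      = ∑ μ : {α : Fin n → Fin N // Monotone α},
          -((((fiber μ).card : ℝ)) : ℂ)/2 * ((u μ : ℝ) : ℂ)^2 := by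
    push_cast
    rw [Finset.mul_sum]
    exact Finset.sum_congr rfl (fun μ _ => by ring)
  have eB : (-(1/2 : ℂ)) * ((∑ ν : {α : Fin n → Fin N // StrictMono α},
      (n.factorial : ℝ) * v ν ^ 2 : ℝ) : ℂ)
      = ∑ ν : {α : Fin n → Fin N // StrictMono α},
          -(((n.factorial : ℝ)) : ℂ)/2 * ((v ν : ℝ) : ℂ)^2 := by
    push_cast
    rw [Finset.mul_sum]
    exact Finset.sum_congr rfl (fun ν _ => by ring)
  have eC : ((∑ μ : {α : Fin n → Fin N // Monotone α}, u μ * aSrc J μ : ℝ) : ℂ)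
      = ∑ μ : {α : Fin n → Fin N // Monotone α}, ((aSrc J μ : ℝ) : ℂ) * ((u μ : ℝ) : ℂ) := by
    push_cast
    exact Finset.sum_congr rfl (fun μ _ => by ring)
  have eD : Complex.I * ((∑ ν : {α : Fin n → Fin N // StrictMono α}, v ν * bSrc J ν : ℝ) : ℂ)
      = ∑ ν : {α : Fin n → Fin N // StrictMono α},
          Complex.I * ((bSrc J ν : ℝ) : ℂ) * ((v ν : ℝ) : ℂ) := by
    push_cast
    rw [Finset.mul_sum]
    exact Finset.sum_congr rfl (fun ν _ => by ring)
  rw [← eA, ← eB, ← eC, ← eD]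
  push_cast
  ring

lemma integral_eval (J : (Fin n → Fin N) → ℝ) :
    (∫ p : ({α : Fin n → Fin N // Monotone α} → ℝ) ×
           ({α : Fin n → Fin N // StrictMono α} → ℝ),
        Complex.exp (-(1/2 : ℂ) * ∑ α : Fin n → Fin N,
            ((‖(phiField p.1 p.2 α)‖ : ℝ) : ℂ) ^ 2
          + ∑ α : Fin n → Fin N, phiField p.1 p.2 α * (J α : ℂ)))
    = ((∏ μ : {α : Fin n → Fin N // Monotone α},
          ((Real.pi : ℂ) / (((((fiber μ).card : ℝ)) : ℂ)/2)) ^ (1/2 : ℂ)) *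
       ∏ ν : {α : Fin n → Fin N // StrictMono α},
          ((Real.pi : ℂ) / ((((n.factorial : ℝ)) : ℂ)/2)) ^ (1/2 : ℂ)) *
      Complex.exp (((∑ μ : {α : Fin n → Fin N // Monotone α},
            aSrc J μ ^ 2 / (2 * ((fiber μ).card : ℝ))
          - ∑ ν : {α : Fin n → Fin N // StrictMono α},
            bSrc J ν ^ 2 / (2 * (n.factorial : ℝ)) : ℝ) : ℂ)) := by
  have hsplit : ∀ p : ({α : Fin n → Fin N // Monotone α} → ℝ) ×
      ({α : Fin n → Fin N // StrictMono α} → ℝ),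
      Complex.exp (-(1/2 : ℂ) * ∑ α : Fin n → Fin N,
            ((‖(phiField p.1 p.2 α)‖ : ℝ) : ℂ) ^ 2
          + ∑ α : Fin n → Fin N, phiField p.1 p.2 α * (J α : ℂ))
        = (∏ μ : {α : Fin n → Fin N // Monotone α}, fC J μ (p.1 μ)) *
          ∏ ν : {α : Fin n → Fin N // StrictMono α}, fS J ν (p.2 ν) := by
    intro p
    rw [exponent_eq J p.1 p.2, Complex.exp_add, Complex.exp_sum, Complex.exp_sum]
    rfl
  simp_rw [hsplit]
  rw [MeasureTheory.Measure.volume_eq_prod]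
  rw [MeasureTheory.integral_prod_mul
    (fun x : {α : Fin n → Fin N // Monotone α} → ℝ =>
      ∏ μ : {α : Fin n → Fin N // Monotone α}, fC J μ (x μ))
    (fun y : {α : Fin n → Fin N // StrictMono α} → ℝ =>
      ∏ ν : {α : Fin n → Fin N // StrictMono α}, fS J ν (y ν))]
  rw [MeasureTheory.volume_pi, MeasureTheory.volume_pi]
  rw [MeasureTheory.integral_fintype_prod_eq_prod (fun μ x => fC J μ x),
    MeasureTheory.integral_fintype_prod_eq_prod (fun ν y => fS J ν y)]
  have hC : ∀ μ : {α : Fin n → Fin N // Monotone α}, ∫ x : ℝ, fC J μ x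
      = ((Real.pi : ℂ) / (((((fiber μ).card : ℝ)) : ℂ)/2)) ^ (1/2 : ℂ) *
        Complex.exp (((aSrc J μ ^ 2 / (2 * ((fiber μ).card : ℝ)) : ℝ)) : ℂ) := by
    intro μ
    have hk : (0:ℝ) < ((fiber μ).card : ℝ) := by exact_mod_cast fiber_card_pos μ
    rw [show (fun x : ℝ => fC J μ x) = fun x : ℝ =>
      Complex.exp (-((((fiber μ).card : ℝ)) : ℂ)/2 * x^2 + ((aSrc J μ : ℝ) : ℂ) * x) from rfl,
      gauss_real _ hk]
    congr 1
    push_cast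
    ring_nf
  have hS : ∀ ν : {α : Fin n → Fin N // StrictMono α}, ∫ y : ℝ, fS J ν y
      = ((Real.pi : ℂ) / ((((n.factorial : ℝ)) : ℂ)/2)) ^ (1/2 : ℂ) *
        Complex.exp ((( - (bSrc J ν ^ 2 / (2 * (n.factorial : ℝ))) : ℝ)) : ℂ) := by
    intro ν
    have hk : (0:ℝ) < ((n.factorial : ℝ)) := by
      exact_mod_cast Nat.factorial_pos n
    rw [show (fun y : ℝ => fS J ν y) = fun y : ℝ =>
      Complex.exp (-(((n.factorial : ℝ)) : ℂ)/2 * y^2 + (Complex.I * ((bSrc J ν : ℝ) : ℂ)) * y) from rfl,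
      gauss_real _ hk]
    congr 1
    rw [mul_pow, Complex.I_sq]
    push_cast
    ring_nf
  simp_rw [hC, hS]
  rw [Finset.prod_mul_distrib, Finset.prod_mul_distrib, ← Complex.exp_sum, ← Complex.exp_sum]
  rw [← Complex.ofReal_sum, ← Complex.ofReal_sum]
  rw [show ((∑ ν : {α : Fin n → Fin N // StrictMono α},
      -(bSrc J ν ^ 2 / (2 * (n.factorial : ℝ))) : ℝ) : ℂ)
    = -((∑ ν : {α : Fin n → Fin N // StrictMono α},
      bSrc J ν ^ 2 / (2 * (n.factorial : ℝ)) : ℝ) : ℂ) by push_cast; rw [Finset.sum_neg_distrib]]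
  rw [Complex.ofReal_sub, sub_eq_add_neg, Complex.exp_add]
  ring

theorem complex_free_partition_function' (n N : ℕ) (hn : 1 ≤ n) (hN : 1 ≤ N)
    (J : (Fin n → Fin N) → ℝ) :
    (∫ p : ({α : Fin n → Fin N // Monotone α} → ℝ) ×
           ({α : Fin n → Fin N // StrictMono α} → ℝ),
        Complex.exp (-(1/2 : ℂ) * ∑ α : Fin n → Fin N,
            ((‖(phiField p.1 p.2 α)‖ : ℝ) : ℂ) ^ 2
          + ∑ α : Fin n → Fin N, phiField p.1 p.2 α * (J α : ℂ))) /
    (∫ p : ({α : Fin n → Fin N // Monotone α} → ℝ) ×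
           ({α : Fin n → Fin N // StrictMono α} → ℝ),
        Complex.exp (-(1/2 : ℂ) * ∑ α : Fin n → Fin N,
            ((‖(phiField p.1 p.2 α)‖ : ℝ) : ℂ) ^ 2)) =
    Complex.exp ((1/2 : ℂ) * ∑ α : Fin n → Fin N, ∑ β : Fin n → Fin N,
        ((J α : ℂ) * (oddProp α β : ℂ) * (J β : ℂ))) := by
  have hnum := integral_eval (n := n) (N := N) J
  have hden0 := integral_eval (n := n) (N := N) (fun _ => 0)
  have hred : (∫ p : ({α : Fin n → Fin N // Monotone α} → ℝ) ×
           ({α : Fin n → Fin N // StrictMono α} → ℝ),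
        Complex.exp (-(1/2 : ℂ) * ∑ α : Fin n → Fin N,
            ((‖(phiField p.1 p.2 α)‖ : ℝ) : ℂ) ^ 2))
      = ∫ p : ({α : Fin n → Fin N // Monotone α} → ℝ) ×
           ({α : Fin n → Fin N // StrictMono α} → ℝ),
        Complex.exp (-(1/2 : ℂ) * ∑ α : Fin n → Fin N,
            ((‖(phiField p.1 p.2 α)‖ : ℝ) : ℂ) ^ 2
          + ∑ α : Fin n → Fin N, phiField p.1 p.2 α * (((fun _ => 0 : (Fin n → Fin N) → ℝ)) α : ℂ)) := by
    congr 1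
    funext p
    simp
  have ha0 : ∀ μ : {α : Fin n → Fin N // Monotone α}, aSrc (fun _ => 0) μ = 0 := by
    intro μ; simp [aSrc]
  have hb0 : ∀ ν : {α : Fin n → Fin N // StrictMono α},
      bSrc (n := n) (N := N) (fun _ => 0) ν = 0 := by
    intro ν; simp [bSrc, Bsum]
  rw [hnum, hred, hden0]
  simp only [ha0, hb0]
  set K := (∏ μ : {α : Fin n → Fin N // Monotone α},
          ((Real.pi : ℂ) / (((((fiber μ).card : ℝ)) : ℂ)/2)) ^ (1/2 : ℂ)) *
       ∏ ν : {α : Fin n → Fin N // StrictMono α},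
          ((Real.pi : ℂ) / ((((n.factorial : ℝ)) : ℂ)/2)) ^ (1/2 : ℂ) with hK
  have hKne : K ≠ 0 := by
    rw [hK]
    apply mul_ne_zero <;>
    · apply Finset.prod_ne_zero_iff.mpr
      intro μ _
      rw [Ne, Complex.cpow_eq_zero_iff]
      rintro ⟨h1, -⟩
      apply div_eq_zero_iff.mp h1 |>.elim
      · intro h
        exact Real.pi_ne_zero (by exact_mod_cast h)
      · intro h
        have : ((2:ℂ)) ≠ 0 := two_ne_zero
        rcases div_eq_zero_iff.mp h with h2 | h2
        · first
          | exact absurd (by exact_mod_cast h2 : ((Finset.card _ : ℝ)) = 0)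
              (by exact_mod_cast (fiber_card_pos _).ne')
          | exact absurd (by exact_mod_cast h2 : ((n.factorial : ℝ)) = 0)
              (by exact_mod_cast (Nat.factorial_pos n).ne')
        · exact this h2
  have hsimp : ((∑ μ : {α : Fin n → Fin N // Monotone α},
      (0:ℝ) ^ 2 / (2 * ((fiber μ).card : ℝ))
      - ∑ ν : {α : Fin n → Fin N // StrictMono α},
      (0:ℝ) ^ 2 / (2 * (n.factorial : ℝ)) : ℝ) : ℂ) = 0 := by
    simp
  rw [hsimp, Complex.exp_zero, mul_one, mul_div_cancel_left₀ _ hKne]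
  have hcast : (1/2 : ℂ) * ∑ α : Fin n → Fin N, ∑ β : Fin n → Fin N,
      ((J α : ℂ) * (oddProp α β : ℂ) * (J β : ℂ))
      = (((1/2 : ℝ) * ∑ α : Fin n → Fin N, ∑ β : Fin n → Fin N,
          J α * oddProp α β * J β : ℝ) : ℂ) := by
    push_cast
    ring
  rw [hcast]
  exact congrArg (fun t : ℝ => Complex.exp (t : ℂ)) (key_identity J).symm

/-- Complex case of Proposition 1 (GM:rel): the free partition function of the rank-`n`
generalized matrix model whose complex tensor field has fully symmetric real part and
fully antisymmetric imaginary part, in presence of a real source `J`, equals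
`exp((1/2)·J G J)` with propagator `G = (2/n!)·Σ_{τ odd} ∏ᵢ δ_{α(τ(i)) β(i)}`. -/
theorem complex_free_partition_function (n N : ℕ) (hn : 1 ≤ n) (hN : 1 ≤ N)
    (J : (Fin n → Fin N) → ℝ) :
    (∫ p : ({α : Fin n → Fin N // Monotone α} → ℝ) ×
           ({α : Fin n → Fin N // StrictMono α} → ℝ),
        Complex.exp (-(1/2 : ℂ) * ∑ α : Fin n → Fin N,
            ((‖(phiField p.1 p.2 α)‖ : ℝ) : ℂ) ^ 2
          + ∑ α : Fin n → Fin N, phiField p.1 p.2 α * (J α : ℂ))) /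
    (∫ p : ({α : Fin n → Fin N // Monotone α} → ℝ) ×
           ({α : Fin n → Fin N // StrictMono α} → ℝ),
        Complex.exp (-(1/2 : ℂ) * ∑ α : Fin n → Fin N,
            ((‖(phiField p.1 p.2 α)‖ : ℝ) : ℂ) ^ 2)) =
    Complex.exp ((1/2 : ℂ) * ∑ α : Fin n → Fin N, ∑ β : Fin n → Fin N,
        ((J α : ℂ) * (oddProp α β : ℂ) * (J β : ℂ))) := by
  exact complex_free_partition_function' n N hn hN J
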